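/- Let K ⊆ L be a finite Galois extension with K containing all roots of unity. For every torsion element α of L*/K* and any lift α̃ ∈ L*, the function sending γ ∈ Gal(L/K) to γ(α̃)/α̃ is a well-defined element of Hom(Gal(L/K), K*), and the resulting map from the torsion subgroup of L*/K* to Hom(Gal(L/K), K*) is an injective group homomorphism. -/

import Mathlib

/-- Let K ⊆ L be a finite Galois extension with K containing all roots of
unity. For every torsion element α of L*/K* with lift α̃ ∈ L*, the map
γ ↦ γ(α̃)/α̃ is a well-defined element of Hom(Gal(L/K), K*), and the resulting
map from the torsion subgroup of L*/K* to Hom(Gal(L/K), K*) is an injective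
group homomorphism. -/
theorem stmt_5 (K L : Type*) [Field K] [Field L] [Algebra K L]
    [IsGalois K L] [FiniteDimensional K L]
    (hroots : ∀ m : ℕ, 0 < m →
      (Polynomial.X ^ m - 1 : Polynomial K).Splits) :
    ∃ ζ : CommGroup.torsion (Lˣ ⧸ (Units.map (algebraMap K L).toMonoidHom).range)
        →* ((L ≃ₐ[K] L) →* Kˣ),
      Function.Injective ζ ∧
      ∀ (α : Lˣ)
        (hα : (QuotientGroup.mk α : Lˣ ⧸ (Units.map (algebraMap K L).toMonoidHom).range)
          ∈ CommGroup.torsion (Lˣ ⧸ (Units.map (algebraMap K L).toMonoidHom).range))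
        (γ : L ≃ₐ[K] L),
        algebraMap K L ((ζ ⟨QuotientGroup.mk α, hα⟩) γ : K) = γ (α : L) / (α : L) := by
  classical
  set N : Subgroup Lˣ := (Units.map (algebraMap K L).toMonoidHom).range with hNdef
  set Q := Lˣ ⧸ N
  have inj : Function.Injective (algebraMap K L) := (algebraMap K L).injective
  -- roots of unity in L come from K
  have hrou : ∀ (x : L) (n : ℕ), 0 < n → x ^ n = 1 → ∃ k : K, algebraMap K L k = x := by
    intro x n hn hx
    have hne : (Polynomial.X ^ n - 1 : Polynomial K) ≠ 0 := by
      have := Polynomial.X_pow_sub_C_ne_zero hn (1 : K)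
      simpa using this
    have hx' : x ∈ ((Polynomial.X ^ n - 1 : Polynomial K).map (algebraMap K L)).roots := by
      rw [Polynomial.mem_roots ((Polynomial.map_ne_zero_iff inj).mpr hne)]
      simp [Polynomial.IsRoot, Polynomial.map_sub, Polynomial.map_pow, hx]
    rw [(hroots n hn).roots_map _] at hx'
    obtain ⟨k, _, hk⟩ := Multiset.mem_map.mp hx'
    exact ⟨k, hk⟩
  -- membership in N unfolded
  have hmemN : ∀ β : Lˣ, β ∈ N ↔ ∃ k : K, algebraMap K L k = (β : L) := by
    intro β
    constructor
    · rintro ⟨c, rfl⟩; exact ⟨(c : K), rfl⟩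
    · rintro ⟨k, hk⟩
      have hk0 : k ≠ 0 := by
        rintro rfl; simp at hk; exact β.ne_zero hk.symm
      refine ⟨Units.mk0 k hk0, Units.ext ?_⟩
      simpa using hk
  -- key: for torsion α and γ, γ α / α lies in Kˣ
  have key : ∀ α : Lˣ, (QuotientGroup.mk α : Q) ∈ CommGroup.torsion Q →
      ∀ γ : L ≃ₐ[K] L, ∃ k : Kˣ, algebraMap K L (k : K) = γ (α : L) / (α : L) := by
    intro α hα γ
    obtain ⟨n, hn, hpow⟩ := isOfFinOrder_iff_pow_eq_one.mp hα
    have hαn : α ^ n ∈ N := by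
      refine (QuotientGroup.eq_one_iff _).mp ?_
      rw [QuotientGroup.mk_pow]
      exact hpow
    obtain ⟨c, hc⟩ := (hmemN _).mp hαn
    have hc' : algebraMap K L c = (α : L) ^ n := by simpa using hc
    have hα0 : (α : L) ≠ 0 := α.ne_zero
    have hγα0 : γ (α : L) ≠ 0 := by
      simpa using (map_ne_zero_iff γ γ.injective).mpr hα0
    have hpow1 : (γ (α : L) / (α : L)) ^ n = 1 := by
      rw [div_pow, ← map_pow, ← hc', AlgEquiv.commutes, hc']
      field_simp
    obtain ⟨k, hk⟩ := hrou _ n hn hpow1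
    have hk0 : k ≠ 0 := by
      rintro rfl
      rw [map_zero] at hk
      rcases div_eq_zero_iff.mp hk.symm with h | h
      · exact hγα0 h
      · exact hα0 h
    exact ⟨Units.mk0 k hk0, hk⟩
  choose kf hkf using key
  -- well-definedness of the value γ α / α on classes
  have hwd : ∀ (α β : Lˣ), (QuotientGroup.mk α : Q) = QuotientGroup.mk β →
      ∀ γ : L ≃ₐ[K] L, γ (β : L) / (β : L) = γ (α : L) / (α : L) := by
    intro α β hab γ
    have : α⁻¹ * β ∈ N := QuotientGroup.eq.mp hab
    obtain ⟨k, hk⟩ := (hmemN _).mp this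
    have hk'' : algebraMap K L k = (α : L)⁻¹ * (β : L) := by
      rw [hk]; push_cast; ring
    have hα0 : (α : L) ≠ 0 := α.ne_zero
    have hβ0 : (β : L) ≠ 0 := β.ne_zero
    have hkβ : (β : L) = (α : L) * algebraMap K L k := by
      rw [hk'']; field_simp
    have hk0 : algebraMap K L k ≠ 0 := by
      intro h; rw [h, mul_zero] at hkβ; exact β.ne_zero hkβ
    rw [hkβ, map_mul, AlgEquiv.commutes]
    field_simp
  have hwdk : ∀ (α β : Lˣ) (hα : (QuotientGroup.mk α : Q) ∈ CommGroup.torsion Q)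
      (hβ : (QuotientGroup.mk β : Q) ∈ CommGroup.torsion Q),
      (QuotientGroup.mk α : Q) = QuotientGroup.mk β →
      ∀ γ : L ≃ₐ[K] L, kf α hα γ = kf β hβ γ := by
    intro α β hα hβ hab γ
    exact Units.ext (inj (by rw [hkf, hkf, hwd α β hab]))
  -- lift of a torsion element
  have hout : ∀ q : CommGroup.torsion Q,
      (QuotientGroup.mk (Quotient.out (q : Q)) : Q) = (q : Q) := fun q => Quotient.out_eq' _
  have houtT : ∀ q : CommGroup.torsion Q,
      (QuotientGroup.mk (Quotient.out (q : Q)) : Q) ∈ CommGroup.torsion Q := by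
    intro q; rw [hout q]; exact q.2
  -- the inner homomorphism
  have innermul : ∀ (α : Lˣ) (hα : (QuotientGroup.mk α : Q) ∈ CommGroup.torsion Q)
      (γ δ : L ≃ₐ[K] L), kf α hα (γ * δ) = kf α hα γ * kf α hα δ := by
    intro α hα γ δ
    refine Units.ext (inj ?_)
    push_cast [map_mul]
    rw [hkf, hkf, hkf]
    have hα0 : (α : L) ≠ 0 := α.ne_zero
    have hδ0 : δ (α : L) ≠ 0 := by simpa using (map_ne_zero_iff δ δ.injective).mpr hα0
    have hγ0 : γ (α : L) ≠ 0 := by simpa using (map_ne_zero_iff γ γ.injective).mpr hα0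
    have hfix : γ (δ (α : L) / (α : L)) = δ (α : L) / (α : L) := by
      rw [← hkf α hα δ, AlgEquiv.commutes]
    rw [map_div₀] at hfix
    have : (γ * δ) (α : L) = γ (δ (α : L)) := rfl
    rw [this]
    field_simp at hfix ⊢
    linear_combination hfix
  refine ⟨{
      toFun := fun q => {
        toFun := fun γ => kf (Quotient.out (q : Q)) (houtT q) γ
        map_one' := by
          refine Units.ext (inj ?_)
          rw [hkf]
          have : (1 : L ≃ₐ[K] L) ((Quotient.out (q : Q) : Lˣ) : L)
              = ((Quotient.out (q : Q) : Lˣ) : L) := rfl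
          rw [this, div_self (Units.ne_zero _)]
          simp
        map_mul' := fun γ δ => innermul _ _ γ δ }
      map_one' := by
        refine MonoidHom.ext fun γ => Units.ext (inj ?_)
        simp only [MonoidHom.coe_mk, OneHom.coe_mk, MonoidHom.one_apply, Units.val_one, map_one]
        rw [hkf]
        have h1 : (QuotientGroup.mk (Quotient.out ((1 : CommGroup.torsion Q) : Q)) : Q)
            = QuotientGroup.mk (1 : Lˣ) := by
          rw [hout]; simp
        rw [← hwd _ (1 : Lˣ) h1 γ]
        simp
      map_mul' := by
        intro q r
        refine MonoidHom.ext fun γ => Units.ext (inj ?_)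
        simp only [MonoidHom.coe_mk, OneHom.coe_mk, MonoidHom.mul_apply, Units.val_mul, map_mul]
        rw [hkf, hkf, hkf]
        have hmk : (QuotientGroup.mk (Quotient.out ((q * r : CommGroup.torsion Q) : Q)) : Q)
            = QuotientGroup.mk (Quotient.out (q : Q) * Quotient.out (r : Q)) := by
          rw [hout, QuotientGroup.mk_mul, hout, hout]; rfl
        rw [← hwd _ _ hmk γ]
        have hα0 : ((Quotient.out (q : Q) : Lˣ) : L) ≠ 0 := Units.ne_zero _
        have hβ0 : ((Quotient.out (r : Q) : Lˣ) : L) ≠ 0 := Units.ne_zero _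
        push_cast [map_mul]
        field_simp }, ?_, ?_⟩
  · -- injectivity
    rw [injective_iff_map_eq_one]
    intro q hq
    set α : Lˣ := Quotient.out (q : Q) with hαdef
    have hfix : ∀ γ : L ≃ₐ[K] L, γ (α : L) = (α : L) := by
      intro γ
      have h1 := DFunLike.congr_fun hq γ
      simp only [MonoidHom.coe_mk, OneHom.coe_mk, MonoidHom.one_apply] at h1
      have h2 := hkf α (houtT q) γ
      rw [h1] at h2
      simp only [Units.val_one, map_one] at h2
      have hα0 : (α : L) ≠ 0 := α.ne_zero
      field_simp at h2
      exact h2.symm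
    have hFF : IntermediateField.fixedField (⊤ : Subgroup (L ≃ₐ[K] L)) = ⊥ :=
      ((IsGalois.tfae (F := K) (E := L)).out 0 1).mp (inferInstance : IsGalois K L)
    have hbot : ((α : Lˣ) : L) ∈ (⊥ : IntermediateField K L) := by
      rw [← hFF]
      exact fun g => hfix g
    obtain ⟨k, hk⟩ := IntermediateField.mem_bot.mp hbot
    have : (α : Lˣ) ∈ N := (hmemN _).mpr ⟨k, hk⟩
    have hone : (q : Q) = 1 := by
      rw [← hout q, QuotientGroup.eq_one_iff]; exact this
    exact Subtype.ext hone
  · -- the formula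
    intro α hα γ
    simp only [MonoidHom.coe_mk, OneHom.coe_mk]
    rw [hkf]
    exact hwd α _ (hout ⟨QuotientGroup.mk α, hα⟩).symm γ
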